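/- For every fixed point p of X, the BB-cell C_p equals the attracting set {L ∈ X : lim_{λ→0} λ•L = p} of p under the diagonal ℂ^×-action, and C_p (with the subspace topology) is homeomorphic to the affine space ℂ^{d(p)}. -/

import Mathlib

open LinearAlgebra.Projectivization Projectivization Filter Topology

noncomputable section

/-- Topology on the projectivization: quotient topology. -/
instance {K V : Type*} [DivisionRing K] [AddCommGroup V] [Module K V] [TopologicalSpace V] :
    TopologicalSpace (ℙ K V) :=
  inferInstanceAs (TopologicalSpace (Quotient (projectivizationSetoid K V)))

variable {M : ℕ}

/-- The index set `B`: `⟨l, i⟩` encodes the basis vector `v_{i+1}^{l+1}` of the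
`(l+1)`-st Jordan block (both indices are 0-based here, 1-based in the paper). -/
abbrev Idx (j : Fin M → ℕ) : Type := Σ l : Fin M, Fin (j l)

variable {j : Fin M → ℕ}

/-- `j_l − i` in the 1-based notation of the paper: the distance from the end of the block. -/
def col (b : Idx j) : ℕ := j b.1 - 1 - b.2.val

/-- The twisted lexicographic order on `B`:
`b < c` iff `col c < col b`, or `col b = col c` and the block of `b` is earlier. -/
def blt (b c : Idx j) : Prop := col c < col b ∨ (col b = col c ∧ b.1 < c.1)

/-- `b ≤ c` for the twisted lexicographic order. -/
def ble (b c : Idx j) : Prop := blt b c ∨ b = c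

/-- The underlying vector space `V = ℂ^B`. -/
abbrev Vsp (j : Fin M → ℕ) : Type := Idx j → ℂ

/-- The standard basis vector `e_b`. -/
def eVec (b : Idx j) : Vsp j := Pi.single b 1

lemma eVec_ne_zero (b : Idx j) : eVec b ≠ 0 := by
  intro h
  have := congrFun h b
  simp [eVec] at this

/-- The nilpotent Jordan map `J` with `J e_{(l,i)} = e_{(l,i+1)}`. -/
def Jmap (j : Fin M → ℕ) : Vsp j →ₗ[ℂ] Vsp j where
  toFun u c :=
    if h : 0 < c.2.val then
      u ⟨c.1, ⟨c.2.val - 1, lt_of_le_of_lt (Nat.sub_le _ _) c.2.isLt⟩⟩ else 0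
  map_add' u v := by funext c; by_cases h : 0 < c.2.val <;> simp [h]
  map_smul' a u := by funext c; by_cases h : 0 < c.2.val <;> simp [h]

/-- The quiver Grassmannian `X ⊆ ℙ(V)^{ℤ/nℤ}` of one-dimensional subrepresentations. -/
def QG (n : ℕ) (j : Fin M → ℕ) : Set (ZMod n → ℙ ℂ (Vsp j)) :=
  {L | ∀ i : ZMod n, (L i).submodule.map (Jmap j) ≤ (L (i + 1)).submodule}

/-- `p` is a fixed point of `X` with index function `f`. -/
def IsFixedPt (n : ℕ) (L : ZMod n → ℙ ℂ (Vsp j)) (f : ZMod n → Idx j) : Prop :=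
  L ∈ QG n j ∧ ∀ i, L i = mk ℂ (eVec (f i)) (eVec_ne_zero (f i))

/-- The cell `C_b ⊆ ℙ(V)`. -/
def Cb (b : Idx j) : Set (ℙ ℂ (Vsp j)) :=
  {x | ∃ (u : Vsp j) (hu : u ≠ 0), x = mk ℂ u hu ∧ u b ≠ 0 ∧ ∀ c, blt c b → u c = 0}

/-- The closed cell `Z_b ⊆ ℙ(V)`. -/
def Zb (b : Idx j) : Set (ℙ ℂ (Vsp j)) :=
  {x | ∃ (u : Vsp j) (hu : u ≠ 0), x = mk ℂ u hu ∧ ∀ c, blt c b → u c = 0}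

/-- The BB-cell of the fixed point with index function `f`. -/
def cell (n : ℕ) (f : ZMod n → Idx j) : Set (ZMod n → ℙ ℂ (Vsp j)) :=
  QG n j ∩ {L | ∀ i, L i ∈ Cb (f i)}

/-- Rescaling of coordinates by units, as a linear map. -/
def scaleV (c : Idx j → ℂˣ) : Vsp j →ₗ[ℂ] Vsp j where
  toFun u b := c b * u b
  map_add' u v := by funext b; simp [mul_add]
  map_smul' a u := by funext b; simp [smul_eq_mul]; ring

lemma scaleV_injective (c : Idx j → ℂˣ) : Function.Injective (scaleV c) := by
  intro u v h
  funext b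
  have hb : (c b : ℂ) * u b = (c b : ℂ) * v b := congrFun h b
  exact mul_left_cancel₀ (Units.ne_zero (c b)) hb

/-- The weight of the `ℂ^×`-action on the coordinate `b`: `l − M(j_l − i)`. -/
def wt (M : ℕ) {j : Fin M → ℕ} (b : Idx j) : ℤ := (b.1.val + 1 : ℤ) - M * col b

/-- The `ℂ^×`-action on `ℙ(V)`: `λ • e_b = λ^{wt b} e_b`. -/
def actP (lam : ℂˣ) : ℙ ℂ (Vsp j) → ℙ ℂ (Vsp j) :=
  Projectivization.map (scaleV fun b => lam ^ wt M b) (scaleV_injective _)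

/-- The punctured-neighborhood filter of `0` in `ℂ`, pulled back to `ℂˣ`. -/
def zeroF : Filter ℂˣ := comap Units.val (𝓝 (0 : ℂ))

end
open Classical in
/-- `d(p)`: the sum over the starting vertices `i` of `p` (those with `J e_{f(i−1)} = 0`)
of the number of basis elements strictly above `f i`. -/
noncomputable def dDim {M : ℕ} {j : Fin M → ℕ} (n : ℕ) [NeZero n] (f : ZMod n → Idx j) : ℕ :=
  ∑ i : ZMod n,
    if Jmap j (eVec (f (i - 1))) = 0 then Nat.card {b : Idx j // blt (f i) b} else 0


namespace QGAux

open LinearAlgebra.Projectivization Projectivization Filter Topology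

variable {M : ℕ} {j : Fin M → ℕ}

/-! ### Order and weight -/

lemma val_mk {n x : ℕ} {h : x < n} : ((⟨x, h⟩ : Fin n) : ℕ) = x := rfl

lemma Idx.mk_eq_mk {l l' : Fin M} {r : Fin (j l)} {r' : Fin (j l')} :
    (⟨l, r⟩ : Idx j) = ⟨l', r'⟩ ↔ l = l' ∧ r.val = r'.val := by
  constructor
  · intro h
    obtain ⟨h1, h2⟩ := Sigma.mk.inj_iff.1 h
    subst h1
    rw [Fin.heq_ext_iff rfl] at h2
    exact ⟨rfl, h2⟩
  · rintro ⟨rfl, h⟩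
    rw [Fin.ext h]

lemma wt_lt_of_blt {b c : Idx j} (h : blt b c) : wt M b < wt M c := by
  have hb := b.1.isLt
  have hc := c.1.isLt
  rcases h with h | ⟨h1, h2⟩
  · have hmul : (M : ℤ) * (col c) + M ≤ (M : ℤ) * (col b) := by
      have : (M : ℤ) * (col c + 1) ≤ (M : ℤ) * (col b) := by
        apply mul_le_mul_of_nonneg_left _ (by positivity)
        exact_mod_cast h
      linarith [this]
    unfold wt
    push_cast
    linarith
  · unfold wt
    rw [h1]
    have : (b.1.val : ℤ) < c.1.val := by exact_mod_cast h2
    linarith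

lemma eq_of_col_eq_fst_eq {b c : Idx j} (h1 : col b = col c) (h2 : b.1 = c.1) : b = c := by
  obtain ⟨bl, br⟩ := b
  obtain ⟨cl, cr⟩ := c
  simp only at h2
  subst h2
  have hbr := br.isLt
  have hcr := cr.isLt
  unfold col at h1
  simp only at h1
  exact Idx.mk_eq_mk.2 ⟨rfl, by omega⟩

lemma blt_trichotomy (b c : Idx j) : blt b c ∨ b = c ∨ blt c b := by
  rcases lt_trichotomy (col c) (col b) with h | h | h
  · exact Or.inl (Or.inl h)
  · rcases lt_trichotomy b.1 c.1 with h2 | h2 | h2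
    · exact Or.inl (Or.inr ⟨h.symm, h2⟩)
    · exact Or.inr (Or.inl (eq_of_col_eq_fst_eq h.symm h2))
    · exact Or.inr (Or.inr (Or.inr ⟨h, h2⟩))
  · exact Or.inr (Or.inr (Or.inl h))

lemma blt_iff_wt {b c : Idx j} : blt b c ↔ wt M b < wt M c := by
  constructor
  · exact wt_lt_of_blt
  · intro h
    rcases blt_trichotomy b c with h1 | h1 | h1
    · exact h1
    · subst h1; exact absurd h (lt_irrefl _)
    · exact absurd (wt_lt_of_blt h1) (by omega)

lemma blt_irrefl (b : Idx j) : ¬ blt b b := by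
  rw [blt_iff_wt]; omega

lemma wt_le_of_not_blt {b c : Idx j} (h : ¬ blt c b) : wt M b ≤ wt M c := by
  by_contra h2
  exact h (blt_iff_wt.2 (by omega))

/-! ### The Jordan map -/

lemma Jmap_apply (v : Vsp j) (c : Idx j) :
    Jmap j v c = if h : 0 < c.2.val then
      v ⟨c.1, ⟨c.2.val - 1, lt_of_le_of_lt (Nat.sub_le _ _) c.2.isLt⟩⟩ else 0 := rfl

lemma Jpow_apply (t : ℕ) (v : Vsp j) (c : Idx j) :
    (Jmap j ^ t) v c = if h : t ≤ c.2.val then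
      v ⟨c.1, ⟨c.2.val - t, lt_of_le_of_lt (Nat.sub_le _ _) c.2.isLt⟩⟩ else 0 := by
  induction t generalizing v c with
  | zero =>
    rw [pow_zero, Module.End.one_apply, dif_pos (Nat.zero_le _)]
    obtain ⟨cl, cr⟩ := c
    exact congrArg v (Idx.mk_eq_mk.2 ⟨rfl, by dsimp only; omega⟩).symm
  | succ t ih =>
    rw [pow_succ', Module.End.mul_apply, Jmap_apply]
    by_cases h : t + 1 ≤ c.2.val
    · rw [dif_pos (by omega), ih, dif_pos (by dsimp only; omega), dif_pos h]
      exact congrArg v (Idx.mk_eq_mk.2 ⟨rfl, by dsimp only; omega⟩)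
    · rw [dif_neg h]
      by_cases h0 : 0 < c.2.val
      · rw [dif_pos h0, ih, dif_neg (by dsimp only; omega)]
      · rw [dif_neg h0]

lemma eVec_apply (b c : Idx j) : eVec b c = if c = b then 1 else 0 := by
  unfold eVec
  rw [Pi.single_apply]

lemma eVec_injective : Function.Injective (eVec (j := j)) := by
  intro b c h
  by_contra hbc
  have := congrFun h b
  rw [eVec_apply, eVec_apply, if_pos rfl, if_neg hbc] at this
  exact one_ne_zero this

lemma Jpow_single (t : ℕ) (b : Idx j) :
    (Jmap j ^ t) (eVec b) = if h : b.2.val + t < j b.1 then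
      eVec ⟨b.1, ⟨b.2.val + t, h⟩⟩ else 0 := by
  obtain ⟨bl, br⟩ := b
  funext c
  obtain ⟨cl, cr⟩ := c
  have hcr := cr.isLt
  have hbr := br.isLt
  rw [Jpow_apply]
  by_cases hclbl : cl = bl
  · subst hclbl
    dsimp only
    simp only [dite_apply, Pi.zero_apply, eVec_apply, Idx.mk_eq_mk, val_mk,
      eq_self_iff_true, true_and]
    split_ifs <;> first | rfl | (exfalso; omega)
  · dsimp only
    simp only [dite_apply, Pi.zero_apply, eVec_apply, Idx.mk_eq_mk, val_mk, hclbl, false_and,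
      if_false]
    split_ifs <;> rfl

lemma Jmap_eVec (b : Idx j) :
    Jmap j (eVec b) = if h : b.2.val + 1 < j b.1 then
      eVec ⟨b.1, ⟨b.2.val + 1, h⟩⟩ else 0 := by
  have := Jpow_single 1 b
  rwa [pow_one] at this

lemma Jmap_eVec_eq_zero_iff (b : Idx j) : Jmap j (eVec b) = 0 ↔ col b = 0 := by
  rw [Jmap_eVec]
  have hb := b.2.isLt
  by_cases h : b.2.val + 1 < j b.1
  · rw [dif_pos h]
    constructor
    · intro h2; exact absurd h2 (eVec_ne_zero _)
    · intro h2; unfold col at h2; omega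
  · rw [dif_neg h]
    constructor
    · intro _; unfold col; omega
    · intro _; rfl

lemma wt_shift {b : Idx j} {t : ℕ} (h : b.2.val + t < j b.1) :
    wt M (⟨b.1, ⟨b.2.val + t, h⟩⟩ : Idx j) = wt M b + M * t := by
  have hcol : col (⟨b.1, ⟨b.2.val + t, h⟩⟩ : Idx j) + t = col b := by
    have := b.2.isLt
    unfold col
    simp only
    omega
  unfold wt
  simp only
  rw [← hcol]
  push_cast
  ring


/-! ### Projectivization: quotient map, openness, membership -/

/-- The quotient map from nonzero vectors to the projectivization. -/
noncomputable def qfull : {v : Vsp j // v ≠ 0} → ℙ ℂ (Vsp j) := fun v => mk ℂ v.1 v.2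

lemma qfull_eq : qfull (j := j) = @Quotient.mk' _ (projectivizationSetoid ℂ (Vsp j)) := rfl

lemma continuous_qfull : Continuous (qfull (j := j)) := by
  rw [qfull_eq]
  exact @continuous_quotient_mk' _ _ (projectivizationSetoid ℂ (Vsp j))

lemma isQuotientMap_qfull : IsQuotientMap (qfull (j := j)) := by
  rw [qfull_eq]
  exact @isQuotientMap_quotient_mk' _ _ (projectivizationSetoid ℂ (Vsp j))

lemma qfull_eq_iff (v w : {v : Vsp j // v ≠ 0}) :
    qfull v = qfull w ↔ ∃ a : ℂˣ, a • (w : Vsp j) = v := by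
  exact mk_eq_mk_iff ℂ v.1 w.1 v.2 w.2

lemma isOpenMap_qfull : IsOpenMap (qfull (j := j)) := by
  intro O hO
  rw [← isQuotientMap_qfull.isOpen_preimage]
  have : qfull ⁻¹' (qfull '' O) = ⋃ t : ℂˣ, (fun x : {v : Vsp j // v ≠ 0} => t • x.1) ⁻¹' (Subtype.val '' O) := by
    ext x
    simp only [Set.mem_preimage, Set.mem_image, Set.mem_iUnion]
    constructor
    · rintro ⟨v, hv, hq⟩
      obtain ⟨t, ht⟩ := (qfull_eq_iff v x).1 hq
      exact ⟨t, v, hv, ht.symm⟩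
    · rintro ⟨t, v, hv, ht⟩
      exact ⟨v, hv, (qfull_eq_iff v x).2 ⟨t, ht.symm⟩⟩
  rw [this]
  apply isOpen_iUnion
  intro t
  apply IsOpen.preimage (by fun_prop)
  -- Subtype.val '' O is open
  obtain ⟨W, hW, rfl⟩ := isOpen_induced_iff.1 hO
  have himg : Subtype.val '' (Subtype.val ⁻¹' W : Set {v : Vsp j // v ≠ 0}) = W ∩ {v : Vsp j | v ≠ 0} := by
    ext z
    constructor
    · rintro ⟨⟨y, hy⟩, hyW, rfl⟩
      exact ⟨hyW, hy⟩
    · rintro ⟨hzW, hz⟩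
      exact ⟨⟨z, hz⟩, hzW, rfl⟩
  rw [himg]
  exact hW.inter (isOpen_compl_singleton)

lemma mk_mem_Cb_iff {b : Idx j} (v : Vsp j) (hv : v ≠ 0) :
    mk ℂ v hv ∈ Cb b ↔ (v b ≠ 0 ∧ ∀ c, blt c b → v c = 0) := by
  constructor
  · rintro ⟨u, hu, hmk, hub, hlow⟩
    obtain ⟨t, ht⟩ := (mk_eq_mk_iff ℂ v u hv hu).1 hmk
    constructor
    · intro h
      apply hub
      have h2 := congrFun ht b
      rw [Pi.smul_apply, Units.smul_def, smul_eq_mul, h] at h2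
      rcases mul_eq_zero.1 h2 with h' | h'
      · exact absurd h' t.ne_zero
      · exact h'
    · intro c hc
      have h2 := congrFun ht c
      rw [Pi.smul_apply, Units.smul_def, smul_eq_mul, hlow c hc, mul_zero] at h2
      exact h2.symm
  · rintro ⟨h1, h2⟩
    exact ⟨v, hv, rfl, h1, h2⟩

lemma rep_mem_Cb_iff {b : Idx j} (x : ℙ ℂ (Vsp j)) :
    x ∈ Cb b ↔ (x.rep b ≠ 0 ∧ ∀ c, blt c b → x.rep c = 0) := by
  conv_lhs => rw [← x.mk_rep]
  exact mk_mem_Cb_iff _ _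

/-- The basic open set `{[v] : ‖v c‖ < ‖v b‖}`. -/
def ratioSet (b c : Idx j) : Set (ℙ ℂ (Vsp j)) :=
  qfull '' {x : {v : Vsp j // v ≠ 0} | ‖x.1 c‖ < ‖x.1 b‖}

lemma isOpen_ratioSet (b c : Idx j) : IsOpen (ratioSet b c) := by
  apply isOpenMap_qfull
  exact isOpen_lt (((continuous_apply c).comp continuous_subtype_val).norm)
    (((continuous_apply b).comp continuous_subtype_val).norm)

lemma mem_ratioSet_iff {b c : Idx j} (v : Vsp j) (hv : v ≠ 0) :
    mk ℂ v hv ∈ ratioSet b c ↔ ‖v c‖ < ‖v b‖ := by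
  constructor
  · rintro ⟨w, hw, hq⟩
    obtain ⟨t, ht⟩ := (qfull_eq_iff w ⟨v, hv⟩).1 hq
    simp only [Set.mem_setOf_eq] at hw
    rw [← ht] at hw
    simp only [Pi.smul_apply, Units.smul_def, smul_eq_mul, norm_mul] at hw
    have ht0 : (0 : ℝ) < ‖(t : ℂ)‖ := by
      simp [norm_pos_iff, t.ne_zero]
    exact (mul_lt_mul_iff_right₀ ht0).1 hw
  · intro h
    exact ⟨⟨v, hv⟩, h, rfl⟩

/-! ### The ℂ^× action and limits -/

lemma scaleV_apply (c : Idx j → ℂˣ) (u : Vsp j) (b : Idx j) :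
    scaleV c u b = (c b : ℂ) * u b := rfl

lemma scaleV_ne_zero (c : Idx j → ℂˣ) {v : Vsp j} (hv : v ≠ 0) : scaleV c v ≠ 0 := by
  intro h
  exact hv (scaleV_injective c (h.trans (map_zero (scaleV c)).symm))

lemma actP_mk (lam : ℂˣ) (v : Vsp j) (hv : v ≠ 0) :
    actP lam (mk ℂ v hv) =
      mk ℂ (scaleV (fun b => lam ^ wt M b) v) (scaleV_ne_zero _ hv) := by
  unfold actP
  rw [Projectivization.map_mk]

instance zeroF_neBot : (zeroF).NeBot := by
  unfold zeroF
  apply comap_neBot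
  intro t ht
  have h1 : t ∩ {z : ℂ | z ≠ 0} ∈ 𝓝[≠] (0 : ℂ) :=
    Filter.inter_mem (mem_nhdsWithin_of_mem_nhds ht) self_mem_nhdsWithin
  obtain ⟨z, hzt, hz0⟩ := Filter.nonempty_of_mem h1
  exact ⟨Units.mk0 z hz0, hzt⟩

lemma tendsto_val_zeroF : Tendsto (Units.val : ℂˣ → ℂ) zeroF (𝓝 0) := tendsto_comap

lemma tendsto_zpow_zeroF {d : ℤ} (hd : 0 < d) :
    Tendsto (fun lam : ℂˣ => (lam : ℂ) ^ d) zeroF (𝓝 0) := by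
  have h1 : ∀ lam : ℂˣ, (lam : ℂ) ^ d.toNat = (lam : ℂ) ^ d := fun lam => by
    rw [← zpow_natCast, Int.toNat_of_nonneg hd.le]
  have h2 : Tendsto (fun z : ℂ => z ^ d.toNat) (𝓝 0) (𝓝 0) := by
    simpa [zero_pow (by omega : d.toNat ≠ 0)] using (continuous_pow d.toNat).tendsto (0 : ℂ)
  exact (h2.comp tendsto_val_zeroF).congr h1

lemma tendsto_actP_of_mem {b : Idx j} {x : ℙ ℂ (Vsp j)} (hx : x ∈ Cb b) :
    Tendsto (fun lam : ℂˣ => actP lam x) zeroF (𝓝 (mk ℂ (eVec b) (eVec_ne_zero b))) := by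
  obtain ⟨hb, hlow⟩ := (rep_mem_Cb_iff x).1 hx
  set u := x.rep with hu
  set w : ℂˣ → Vsp j := fun lam => fun c => (lam : ℂ) ^ (wt M c - wt M b) * u c with hw
  have hwb : ∀ lam, w lam b = u b := fun lam => by
    simp [hw, sub_self]
  have hwne : ∀ lam, w lam ≠ 0 := by
    intro lam h
    apply hb
    rw [← hwb lam, h, Pi.zero_apply]
  have hmain : ∀ lam : ℂˣ, actP lam x = qfull ⟨w lam, hwne lam⟩ := by
    intro lam
    conv_lhs => rw [← x.mk_rep]
    rw [actP_mk]
    show _ = mk ℂ (w lam) (hwne lam)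
    rw [mk_eq_mk_iff]
    refine ⟨lam ^ wt M b, ?_⟩
    funext c
    rw [Pi.smul_apply, Units.smul_def, smul_eq_mul, scaleV_apply, hw]
    simp only
    rw [Units.val_zpow_eq_zpow_val, Units.val_zpow_eq_zpow_val, ← mul_assoc,
      ← zpow_add₀ lam.ne_zero]
    congr 2
    ring
  have hne2 : u b • eVec b ≠ 0 := smul_ne_zero hb (eVec_ne_zero b)
  have htarget : mk ℂ (eVec b) (eVec_ne_zero b) = qfull ⟨u b • eVec b, hne2⟩ := by
    show _ = mk ℂ (u b • eVec b) hne2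
    rw [mk_eq_mk_iff]
    exact ⟨(Units.mk0 (u b) hb)⁻¹, by
      funext c
      simp [Units.smul_def, Units.mk0, smul_eq_mul]
      rw [← mul_assoc, inv_mul_cancel₀ hb, one_mul]⟩
  rw [htarget]
  simp only [funext hmain]
  apply (continuous_qfull.continuousAt (x := ⟨u b • eVec b, hne2⟩)).tendsto.comp
  rw [tendsto_subtype_rng]
  apply tendsto_pi_nhds.2
  intro c
  show Tendsto (fun lam : ℂˣ => w lam c) zeroF (𝓝 ((u b • eVec b) c))
  by_cases hcb : c = b
  · subst hcb
    have : ∀ lam : ℂˣ, w lam c = u c := hwb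
    simp only [this]
    have : (u c • eVec c) c = u c := by
      rw [Pi.smul_apply, eVec_apply, if_pos rfl, smul_eq_mul, mul_one]
    rw [this]
    exact tendsto_const_nhds
  · have htc : (u b • eVec b) c = 0 := by
      rw [Pi.smul_apply, eVec_apply, if_neg hcb, smul_eq_mul, mul_zero]
    rw [htc]
    by_cases huc : u c = 0
    · have : ∀ lam : ℂˣ, w lam c = 0 := fun lam => by rw [hw]; simp [huc]
      simp only [this]
      exact tendsto_const_nhds
    · have hblt : blt b c := by
        rcases blt_trichotomy b c with h | h | h
        · exact h
        · exact absurd h.symm hcb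
        · exact absurd (hlow c h) huc
      have hd : 0 < wt M c - wt M b := by
        have := blt_iff_wt.1 hblt
        omega
      have := (tendsto_zpow_zeroF hd).mul_const (u c)
      rw [zero_mul] at this
      exact this
  done

lemma not_tendsto_of_not_mem {b : Idx j} {x : ℙ ℂ (Vsp j)} (hx : x ∉ Cb b) :
    ¬ Tendsto (fun lam : ℂˣ => actP lam x) zeroF (𝓝 (mk ℂ (eVec b) (eVec_ne_zero b))) := by
  intro ht
  set u := x.rep with hu
  have hx' : ¬ (u b ≠ 0 ∧ ∀ c, blt c b → u c = 0) := fun h => hx ((rep_mem_Cb_iff x).2 h)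
  push_neg at hx'
  -- choose a bad coordinate c0
  obtain ⟨c0, hc0ne, hc0⟩ : ∃ c0, u c0 ≠ 0 ∧ (u b = 0 ∨ wt M c0 < wt M b) := by
    by_cases hub : u b = 0
    · obtain ⟨c0, hc0⟩ := Function.ne_iff.1 x.rep_nonzero
      exact ⟨c0, hc0, Or.inl hub⟩
    · obtain ⟨c0, hlt, hne⟩ := hx' hub
      exact ⟨c0, hne, Or.inr (blt_iff_wt.1 hlt)⟩
  have hc0b : c0 ≠ b := by
    rcases hc0 with h | h
    · intro he; exact hc0ne (he ▸ h)
    · intro he; subst he; omega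
  -- the open set
  have hUopen := isOpen_ratioSet (j := j) b c0
  have hUmem : mk ℂ (eVec b) (eVec_ne_zero b) ∈ ratioSet b c0 := by
    rw [mem_ratioSet_iff]
    rw [eVec_apply, eVec_apply, if_pos rfl, if_neg hc0b]
    simp
  have hev : ∀ᶠ lam : ℂˣ in zeroF, actP lam x ∈ ratioSet b c0 :=
    ht.eventually (hUopen.mem_nhds hUmem)
  have hform : ∀ lam : ℂˣ, actP lam x ∈ ratioSet b c0 ↔
      ‖(lam : ℂ) ^ wt M c0‖ * ‖u c0‖ < ‖(lam : ℂ) ^ wt M b‖ * ‖u b‖ := by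
    intro lam
    conv_lhs => rw [← x.mk_rep, actP_mk]
    rw [mem_ratioSet_iff]
    rw [scaleV_apply, scaleV_apply, norm_mul, norm_mul,
      Units.val_zpow_eq_zpow_val, Units.val_zpow_eq_zpow_val]
  rcases hc0 with hub | hwlt
  · obtain ⟨lam, hlam⟩ := hev.exists
    rw [hform lam, hub, norm_zero, mul_zero] at hlam
    exact absurd hlam (not_lt.2 (by positivity))
  · set d : ℤ := wt M b - wt M c0 with hd
    have hdpos : 0 < d := by omega
    have htend : Tendsto (fun lam : ℂˣ => ‖(lam : ℂ) ^ d‖ * ‖u b‖) zeroF (𝓝 0) := by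
      have := ((tendsto_zpow_zeroF hdpos).norm).mul_const ‖u b‖
      rwa [norm_zero, zero_mul] at this
    have hevt : ∀ᶠ lam : ℂˣ in zeroF, ‖(lam : ℂ) ^ d‖ * ‖u b‖ < ‖u c0‖ :=
      htend.eventually_lt_const (norm_pos_iff.2 hc0ne)
    obtain ⟨lam, h1, h2⟩ := (hev.and hevt).exists
    rw [hform lam] at h1
    have hsplit : (lam : ℂ) ^ wt M b = (lam : ℂ) ^ wt M c0 * (lam : ℂ) ^ d := by
      rw [← zpow_add₀ lam.ne_zero]
      congr 1
      omega
    rw [hsplit, norm_mul, mul_assoc] at h1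
    have hpos : 0 < ‖(lam : ℂ) ^ wt M c0‖ :=
      norm_pos_iff.2 (zpow_ne_zero _ lam.ne_zero)
    have := (mul_lt_mul_iff_right₀ hpos).1 h1
    linarith

/-! ### Part 1 assembly -/

lemma cell_eq_attracting {n : ℕ} [NeZero n] (f : ZMod n → Idx j) (p : ZMod n → ℙ ℂ (Vsp j))
    (hp : IsFixedPt n p f) :
    cell n f = {L | L ∈ QG n j ∧
      Tendsto (fun lam : ℂˣ => fun i => actP lam (L i)) zeroF (𝓝 p)} := by
  ext L
  constructor
  · rintro ⟨hQG, hC⟩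
    refine ⟨hQG, ?_⟩
    rw [tendsto_pi_nhds]
    intro i
    rw [hp.2 i]
    exact tendsto_actP_of_mem (hC i)
  · rintro ⟨hQG, htd⟩
    refine ⟨hQG, fun i => ?_⟩
    by_contra hC
    exact not_tendsto_of_not_mem hC (by rw [← hp.2 i]; exact tendsto_pi_nhds.1 htd i)

/-! ### The affine chart on a cell -/

/-- The type of coordinates strictly above `b`. -/
abbrev Tb (b : Idx j) : Type _ := {c : Idx j // blt b c}

/-- The chart map (defined globally via `rep`, only meaningful on `Cb b`). -/
noncomputable def chartFun (b : Idx j) (x : ℙ ℂ (Vsp j)) : Tb b → ℂ :=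
  fun c => x.rep c.1 / x.rep b

lemma chartFun_mk {b : Idx j} (v : Vsp j) (hv : v ≠ 0) (c : Tb b) :
    chartFun b (mk ℂ v hv) c = v c.1 / v b := by
  obtain ⟨a, ha⟩ := exists_smul_eq_mk_rep ℂ v hv
  unfold chartFun
  rw [← ha, Pi.smul_apply, Pi.smul_apply, Units.smul_def, Units.smul_def,
    smul_eq_mul, smul_eq_mul, mul_div_mul_left _ _ a.ne_zero]

/-- The cone over `Cb b`, inside nonzero vectors. -/
def Kone (b : Idx j) : Set {v : Vsp j // v ≠ 0} :=
  {v | v.1 b ≠ 0 ∧ ∀ c, blt c b → v.1 c = 0}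

lemma mem_Kone_iff_qfull_mem {b : Idx j} (v : {v : Vsp j // v ≠ 0}) :
    v ∈ Kone b ↔ qfull v ∈ Cb b := (mk_mem_Cb_iff v.1 v.2).symm

/-- The restricted quotient map onto the cell `Cb b`. -/
noncomputable def qres (b : Idx j) (v : Kone b) : Cb b :=
  ⟨qfull v.1, (mem_Kone_iff_qfull_mem v.1).1 v.2⟩

lemma continuous_qres (b : Idx j) : Continuous (qres b) := by
  apply Continuous.subtype_mk
  exact continuous_qfull.comp continuous_subtype_val

lemma surjective_qres (b : Idx j) : Function.Surjective (qres b) := by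
  rintro ⟨x, hx⟩
  obtain ⟨h1, h2⟩ := (rep_mem_Cb_iff x).1 hx
  refine ⟨⟨⟨x.rep, x.rep_nonzero⟩, ⟨h1, h2⟩⟩, ?_⟩
  apply Subtype.ext
  show qfull _ = x
  exact x.mk_rep

lemma isOpenMap_qres (b : Idx j) : IsOpenMap (qres b) := by
  intro O hO
  obtain ⟨W, hW, rfl⟩ := isOpen_induced_iff.1 hO
  have hW2 : IsOpen (W ∩ {v : {v : Vsp j // v ≠ 0} | v.1 b ≠ 0}) := by
    apply hW.inter
    exact isOpen_compl_singleton.preimage ((continuous_apply b).comp continuous_subtype_val)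
  have key : qres b '' (Subtype.val ⁻¹' W) =
      Subtype.val ⁻¹' (qfull '' (W ∩ {v : {v : Vsp j // v ≠ 0} | v.1 b ≠ 0})) := by
    ext x
    constructor
    · rintro ⟨v, hv, rfl⟩
      exact ⟨v.1, ⟨hv, v.2.1⟩, rfl⟩
    · rintro ⟨w, ⟨hwW, hwb⟩, hq⟩
      have hwK : w ∈ Kone b := by
        rw [mem_Kone_iff_qfull_mem, hq]
        exact x.2
      refine ⟨⟨w, hwK⟩, hwW, ?_⟩
      apply Subtype.ext
      exact hq
    
  rw [key]
  exact (isOpenMap_qfull _ hW2).preimage continuous_subtype_val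

lemma isQuotientMap_qres (b : Idx j) : IsQuotientMap (qres b) :=
  (isOpenMap_qres b).isQuotientMap (continuous_qres b) (surjective_qres b)

lemma continuous_chart_on_cell (b : Idx j) :
    Continuous fun x : Cb b => chartFun b x.1 := by
  rw [(isQuotientMap_qres b).continuous_iff]
  have : (fun x : Cb b => chartFun b x.1) ∘ qres b =
      fun v : Kone b => fun c : Tb b => v.1.1 c.1 / v.1.1 b := by
    funext v c
    show chartFun b (mk ℂ v.1.1 v.1.2) c = _
    rw [chartFun_mk]
  rw [this]
  apply continuous_pi
  intro c
  apply Continuous.div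
  · exact (continuous_apply c.1).comp (continuous_subtype_val.comp continuous_subtype_val)
  · exact (continuous_apply b).comp (continuous_subtype_val.comp continuous_subtype_val)
  · exact fun v => v.2.1

/-! ### Fixed point structure -/

open scoped Classical

variable {n : ℕ} [NeZero n]

/-- `i` is a starting vertex. -/
def Sdef (f : ZMod n → Idx j) (i : ZMod n) : Prop := Jmap j (eVec (f (i - 1))) = 0

variable {p : ZMod n → ℙ ℂ (Vsp j)} {f : ZMod n → Idx j}

lemma step_fix (hp : IsFixedPt n p f) (i : ZMod n) (h : ¬ Sdef f (i + 1)) :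
    Jmap j (eVec (f i)) = eVec (f (i + 1)) := by
  have h' : Jmap j (eVec (f i)) ≠ 0 := by
    unfold Sdef at h
    rwa [add_sub_cancel_right] at h
  by_cases hc : (f i).2.val + 1 < j (f i).1
  swap
  · exact absurd (by rw [Jmap_eVec, dif_neg hc]) h'
  have hJ : Jmap j (eVec (f i)) = eVec ⟨(f i).1, ⟨(f i).2.val + 1, hc⟩⟩ := by
    rw [Jmap_eVec, dif_pos hc]
  have hle := hp.1 i
  rw [hp.2 i, hp.2 (i + 1), submodule_mk, submodule_mk] at hle
  have hmem : Jmap j (eVec (f i)) ∈ Submodule.span ℂ {eVec (f (i + 1))} := by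
    apply hle
    exact Submodule.mem_map_of_mem (Submodule.mem_span_singleton_self _)
  rw [Submodule.mem_span_singleton] at hmem
  obtain ⟨cc, hcc⟩ := hmem
  rw [hJ] at hcc
  by_cases hfe : f (i + 1) = ⟨(f i).1, ⟨(f i).2.val + 1, hc⟩⟩
  · rw [hJ, hfe]
  · exfalso
    have h1 := congrFun hcc ⟨(f i).1, ⟨(f i).2.val + 1, hc⟩⟩
    rw [eVec_apply, if_pos rfl, Pi.smul_apply, eVec_apply, smul_eq_mul,
      if_neg (fun h2 => hfe h2.symm)] at h1
    exact one_ne_zero (by rw [mul_zero] at h1; exact h1.symm)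

lemma col_step (hp : IsFixedPt n p f) (i : ZMod n) (h : ¬ Sdef f i) :
    col (f (i - 1)) = col (f i) + 1 := by
  have hfix := step_fix hp (i - 1) (by rwa [sub_add_cancel])
  rw [sub_add_cancel] at hfix
  have h' : Jmap j (eVec (f (i - 1))) ≠ 0 := h
  by_cases hc : (f (i - 1)).2.val + 1 < j (f (i - 1)).1
  swap
  · exact absurd (by rw [Jmap_eVec, dif_neg hc]) h'
  have hJ : Jmap j (eVec (f (i - 1))) = eVec ⟨(f (i - 1)).1, ⟨(f (i - 1)).2.val + 1, hc⟩⟩ := by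
    rw [Jmap_eVec, dif_pos hc]
  have hfi : f i = ⟨(f (i - 1)).1, ⟨(f (i - 1)).2.val + 1, hc⟩⟩ :=
    eVec_injective (by rw [← hfix, hJ])
  rw [hfi]
  unfold col
  simp only
  have := (f (i - 1)).2.isLt
  omega

lemma exists_Sdef (hp : IsFixedPt n p f) (i : ZMod n) : ∃ t : ℕ, Sdef f (i - (t : ZMod n)) := by
  by_contra hno
  push_neg at hno
  have key : ∀ t : ℕ, col (f (i - 1 - (t : ZMod n))) = col (f (i - 1)) + t := by
    intro t
    induction t with
    | zero => simp
    | succ t ih =>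
      have e1 : i - 1 - ((t : ZMod n) + 1) = (i - ((t : ZMod n) + 1)) - 1 := by ring
      have e2 : (i - ((t : ZMod n) + 1)) - 1 + 1 = i - ((t : ZMod n) + 1) := by ring
      have hstep := col_step hp (i - ((t : ZMod n) + 1)) (by
        have := hno (t + 1)
        rwa [Nat.cast_add, Nat.cast_one] at this)
      have e3 : (i - ((t : ZMod n) + 1)) - 1 = i - 1 - ((t : ZMod n) + 1) := by ring
      have e4 : i - ((t : ZMod n) + 1) = i - 1 - (t : ZMod n) := by ring
      rw [e3, e4] at hstep
      rw [Nat.cast_add, Nat.cast_one, hstep, ih]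
      omega
  have hbound : col (f (i - 1 - ((Finset.univ.sup j + 1 : ℕ) : ZMod n))) ≤ Finset.univ.sup j := by
    set b := f (i - 1 - ((Finset.univ.sup j + 1 : ℕ) : ZMod n))
    calc col b ≤ j b.1 := by unfold col; omega
    _ ≤ Finset.univ.sup j := Finset.le_sup (Finset.mem_univ b.1)
  rw [key (Finset.univ.sup j + 1)] at hbound
  omega

/-- distance to the latest starting vertex. -/
noncomputable def kk (hp : IsFixedPt n p f) (i : ZMod n) : ℕ := Nat.find (exists_Sdef hp i)

/-- the latest starting vertex. -/
noncomputable def ss (hp : IsFixedPt n p f) (i : ZMod n) : ZMod n := i - (kk hp i : ZMod n)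

lemma Sdef_ss (hp : IsFixedPt n p f) (i : ZMod n) : Sdef f (ss hp i) :=
  Nat.find_spec (exists_Sdef hp i)

lemma not_Sdef_of_lt (hp : IsFixedPt n p f) {i : ZMod n} {t : ℕ} (ht : t < kk hp i) :
    ¬ Sdef f (i - (t : ZMod n)) := Nat.find_min (exists_Sdef hp i) ht

lemma kk_eq_zero (hp : IsFixedPt n p f) {i : ZMod n} (h : Sdef f i) : kk hp i = 0 := by
  rw [kk, Nat.find_eq_zero]
  simpa using h

lemma ss_eq_self (hp : IsFixedPt n p f) {i : ZMod n} (h : Sdef f i) : ss hp i = i := by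
  rw [ss, kk_eq_zero hp h]
  simp

lemma kk_succ (hp : IsFixedPt n p f) {i : ZMod n} (h : ¬ Sdef f i) :
    kk hp i = kk hp (i - 1) + 1 := by
  rw [kk, Nat.find_eq_iff]
  constructor
  · have := Sdef_ss hp (i - 1)
    rw [ss] at this
    have e1 : i - ((kk hp (i - 1) + 1 : ℕ) : ZMod n) = (i - 1) - (kk hp (i - 1) : ZMod n) := by
      push_cast
      ring
    rwa [e1]
  · intro m hm
    match m with
    | 0 => simpa using h
    | m + 1 =>
      have hmlt : m < kk hp (i - 1) := by omega
      have := not_Sdef_of_lt hp hmlt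
      have e1 : i - ((m + 1 : ℕ) : ZMod n) = (i - 1) - (m : ZMod n) := by
        push_cast
        ring
      rwa [e1]

lemma ss_succ (hp : IsFixedPt n p f) {i : ZMod n} (h : ¬ Sdef f i) :
    ss hp i = ss hp (i - 1) := by
  rw [ss, ss, kk_succ hp h]
  push_cast
  ring

lemma ss_add_kk (hp : IsFixedPt n p f) (i : ZMod n) : ss hp i + (kk hp i : ZMod n) = i := by
  rw [ss]
  ring

lemma Jpow_chain (hp : IsFixedPt n p f) (t : ℕ) (i : ZMod n)
    (h : ∀ t' < t, ¬ Sdef f (i - (t' : ZMod n))) :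
    (Jmap j ^ t) (eVec (f (i - (t : ZMod n)))) = eVec (f i) := by
  induction t with
  | zero => simp
  | succ t ih =>
    have h1 : ¬ Sdef f (i - (t : ZMod n)) := h t (by omega)
    have hstep := step_fix hp (i - (t : ZMod n) - 1) (by rwa [sub_add_cancel])
    rw [sub_add_cancel] at hstep
    have e1 : i - ((t + 1 : ℕ) : ZMod n) = i - (t : ZMod n) - 1 := by
      push_cast
      ring
    rw [e1, pow_succ, Module.End.mul_apply, hstep]
    exact ih (fun t' ht' => h t' (by omega))

lemma Jpow_ss (hp : IsFixedPt n p f) (i : ZMod n) :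
    (Jmap j ^ kk hp i) (eVec (f (ss hp i))) = eVec (f i) :=
  Jpow_chain hp _ i (fun _ ht' => not_Sdef_of_lt hp ht')

lemma Jpow_chain_mid (hp : IsFixedPt n p f) {i : ZMod n} {t : ℕ} (ht : t ≤ kk hp i) :
    (Jmap j ^ t) (eVec (f (ss hp i))) = eVec (f (ss hp i + (t : ZMod n))) := by
  have hmain := Jpow_chain hp t (ss hp i + (t : ZMod n)) (by
    intro t' ht'
    have e2 : ss hp i + (t : ZMod n) - (t' : ZMod n) = i - ((kk hp i - t + t' : ℕ) : ZMod n) := by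
      rw [ss]
      push_cast [Nat.cast_sub ht]
      ring
    rw [e2]
    exact not_Sdef_of_lt hp (by omega))
  rwa [add_sub_cancel_right] at hmain

lemma shift_mid (hp : IsFixedPt n p f) {i : ZMod n} {t : ℕ} (ht : t ≤ kk hp i) :
    ∃ h : (f (ss hp i)).2.val + t < j (f (ss hp i)).1,
      f (ss hp i + (t : ZMod n)) = ⟨(f (ss hp i)).1, ⟨(f (ss hp i)).2.val + t, h⟩⟩ := by
  have hmid := Jpow_chain_mid hp ht
  rw [Jpow_single] at hmid
  by_cases hc : (f (ss hp i)).2.val + t < j (f (ss hp i)).1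
  · rw [dif_pos hc] at hmid
    exact ⟨hc, (eVec_injective hmid).symm⟩
  · rw [dif_neg hc] at hmid
    exact absurd hmid.symm (eVec_ne_zero _)

lemma shift_ss (hp : IsFixedPt n p f) (i : ZMod n) :
    ∃ h : (f (ss hp i)).2.val + kk hp i < j (f (ss hp i)).1,
      f i = ⟨(f (ss hp i)).1, ⟨(f (ss hp i)).2.val + kk hp i, h⟩⟩ := by
  have := shift_mid hp (le_refl (kk hp i))
  rwa [ss_add_kk hp i] at this

/-! ### The parametrization of the cell -/

lemma Idx.ext_val {b c : Idx j} (h1 : b.1 = c.1) (h2 : b.2.val = c.2.val) : b = c := by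
  obtain ⟨bl, br⟩ := b
  obtain ⟨cl, cr⟩ := c
  simp only at h1
  subst h1
  exact Idx.mk_eq_mk.2 ⟨rfl, h2⟩

lemma Jpow_coord (t : ℕ) (v : Vsp j) {b : Idx j} (h : b.2.val + t < j b.1) :
    (Jmap j ^ t) v ⟨b.1, ⟨b.2.val + t, h⟩⟩ = v b := by
  rw [Jpow_apply, dif_pos (by dsimp only; omega)]
  exact congrArg v (Idx.ext_val rfl (by dsimp only; omega))

/-- The affine parameter space for a cell. -/
abbrev Etype (f : ZMod n → Idx j) : Type _ := ∀ i : {i : ZMod n // Sdef f i}, Tb (f i.1) → ℂ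

/-- The normalized vector at a starting vertex. -/
noncomputable def u0 (f : ZMod n → Idx j) (a : Etype f) (i0 : ZMod n) : Vsp j :=
  fun c => if h : Sdef f i0 then
    (if c = f i0 then 1 else if hlt : blt (f i0) c then a ⟨i0, h⟩ ⟨c, hlt⟩ else 0)
  else 0

lemma u0_self {a : Etype f} {i0 : ZMod n} (h : Sdef f i0) : u0 f a i0 (f i0) = 1 := by
  rw [u0, dif_pos h, if_pos rfl]

lemma u0_blt {a : Etype f} {i0 : ZMod n} (h : Sdef f i0) {c : Idx j} (hlt : blt (f i0) c) :
    u0 f a i0 c = a ⟨i0, h⟩ ⟨c, hlt⟩ := by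
  have hne : c ≠ f i0 := fun he => blt_irrefl (f i0) (he ▸ hlt)
  rw [u0, dif_pos h, if_neg hne, dif_pos hlt]

lemma u0_zero {a : Etype f} {i0 : ZMod n} {c : Idx j} (hc : c ≠ f i0)
    (hnlt : ¬ blt (f i0) c) : u0 f a i0 c = 0 := by
  rw [u0]
  by_cases h : Sdef f i0
  · rw [dif_pos h, if_neg hc, dif_neg hnlt]
  · rw [dif_neg h]

lemma u0_support {a : Etype f} {i0 : ZMod n} (h : Sdef f i0) {c : Idx j}
    (hne : u0 f a i0 c ≠ 0) : wt M (f i0) ≤ wt M c := by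
  by_cases hc : c = f i0
  · subst hc; exact le_refl _
  by_cases hlt : blt (f i0) c
  · exact (blt_iff_wt.1 hlt).le
  · exact absurd (u0_zero hc hlt) hne

/-- The vector of the point of the cell at vertex `i` determined by parameters `a`. -/
noncomputable def wv (hp : IsFixedPt n p f) (a : Etype f) (i : ZMod n) : Vsp j :=
  (Jmap j ^ kk hp i) (u0 f a (ss hp i))

lemma wv_fi (hp : IsFixedPt n p f) (a : Etype f) (i : ZMod n) : wv hp a i (f i) = 1 := by
  obtain ⟨hlt, heq⟩ := shift_ss hp i
  rw [wv, heq, Jpow_coord _ _ hlt, u0_self (Sdef_ss hp i)]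

lemma wv_ne (hp : IsFixedPt n p f) (a : Etype f) (i : ZMod n) : wv hp a i ≠ 0 := by
  intro h0
  have := congrFun h0 (f i)
  rw [wv_fi hp a i, Pi.zero_apply] at this
  exact one_ne_zero this

lemma wv_support (hp : IsFixedPt n p f) (a : Etype f) (i : ZMod n) {c : Idx j}
    (hne : wv hp a i c ≠ 0) : wt M (f i) ≤ wt M c := by
  obtain ⟨hlt, heq⟩ := shift_ss hp i
  rw [wv, Jpow_apply] at hne
  by_cases hk : kk hp i ≤ c.2.val
  swap
  · rw [dif_neg hk] at hne
    exact absurd rfl hne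
  rw [dif_pos hk] at hne
  set c' : Idx j := ⟨c.1, ⟨c.2.val - kk hp i, lt_of_le_of_lt (Nat.sub_le _ _) c.2.isLt⟩⟩ with hc'
  have h1 : wt M (f (ss hp i)) ≤ wt M c' := u0_support (Sdef_ss hp i) hne
  have hcb : c'.2.val + kk hp i < j c'.1 := by
    have := c.2.isLt
    simp only [c']
    omega
  have h2 : wt M (⟨c'.1, ⟨c'.2.val + kk hp i, hcb⟩⟩ : Idx j) = wt M c' + M * kk hp i :=
    wt_shift hcb
  have h3 : (⟨c'.1, ⟨c'.2.val + kk hp i, hcb⟩⟩ : Idx j) = c :=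
    Idx.ext_val rfl (by simp only [c']; omega)
  have h4 : wt M (f i) = wt M (f (ss hp i)) + M * kk hp i := by
    rw [heq]
    exact wt_shift hlt
  rw [h3] at h2
  linarith

lemma wv_mem (hp : IsFixedPt n p f) (a : Etype f) (i : ZMod n) :
    mk ℂ (wv hp a i) (wv_ne hp a i) ∈ Cb (f i) := by
  rw [mk_mem_Cb_iff]
  constructor
  · rw [wv_fi hp a i]
    exact one_ne_zero
  · intro c hc
    by_contra hne
    have := wv_support hp a i hne
    have := blt_iff_wt.1 hc
    omega

lemma wv_step (hp : IsFixedPt n p f) (a : Etype f) (i : ZMod n) (h : ¬ Sdef f (i + 1)) :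
    wv hp a (i + 1) = Jmap j (wv hp a i) := by
  have hkk : kk hp (i + 1) = kk hp i + 1 := by
    have := kk_succ hp h
    rwa [add_sub_cancel_right] at this
  have hss : ss hp (i + 1) = ss hp i := by
    have := ss_succ hp h
    rwa [add_sub_cancel_right] at this
  rw [wv, wv, hkk, hss, pow_succ', Module.End.mul_apply]

lemma wv_kill (hp : IsFixedPt n p f) (a : Etype f) (i : ZMod n) (h : Sdef f (i + 1)) :
    Jmap j (wv hp a i) = 0 := by
  have hcol : col (f i) = 0 := by
    have h' : Jmap j (eVec (f i)) = 0 := by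
      have := h
      unfold Sdef at this
      rwa [add_sub_cancel_right] at this
    exact (Jmap_eVec_eq_zero_iff _).1 h'
  funext c
  rw [Jmap_apply, Pi.zero_apply]
  by_cases h0 : 0 < c.2.val
  swap
  · rw [dif_neg h0]
  rw [dif_pos h0]
  by_contra hne
  have hsupp := wv_support hp a i hne
  set c' : Idx j := ⟨c.1, ⟨c.2.val - 1, lt_of_le_of_lt (Nat.sub_le _ _) c.2.isLt⟩⟩ with hc'
  have hcolc : 0 < col c' := by
    have := c.2.isLt
    unfold col
    simp only [c']
    omega
  have : blt c' (f i) := Or.inl (by omega)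
  have := blt_iff_wt.1 this
  omega

lemma wv_QG (hp : IsFixedPt n p f) (a : Etype f) :
    (fun i => mk ℂ (wv hp a i) (wv_ne hp a i)) ∈ QG n j := by
  intro i
  rw [submodule_mk, submodule_mk, Submodule.map_span, Set.image_singleton, Submodule.span_le,
    Set.singleton_subset_iff]
  by_cases h : Sdef f (i + 1)
  · rw [wv_kill hp a i h]
    exact Submodule.zero_mem _
  · rw [← wv_step hp a i h]
    exact Submodule.mem_span_singleton_self _

lemma Psi_mem (hp : IsFixedPt n p f) (a : Etype f) :
    (fun i => mk ℂ (wv hp a i) (wv_ne hp a i)) ∈ cell n f :=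
  ⟨wv_QG hp a, fun i => wv_mem hp a i⟩

/-- The parametrization of the cell. -/
noncomputable def Psi (hp : IsFixedPt n p f) (a : Etype f) : ↥(cell n f) :=
  ⟨fun i => mk ℂ (wv hp a i) (wv_ne hp a i), Psi_mem hp a⟩

/-- The chart of the cell. -/
noncomputable def Phi (hp : IsFixedPt n p f) (L : ↥(cell n f)) : Etype f :=
  fun i => chartFun (f i.1) (L.1 i.1)

lemma continuous_Psi (hp : IsFixedPt n p f) : Continuous (Psi hp) := by
  apply Continuous.subtype_mk
  apply continuous_pi
  intro i
  show Continuous (qfull ∘ (fun a : Etype f => (⟨wv hp a i, wv_ne hp a i⟩ : {v : Vsp j // v ≠ 0})))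
  apply continuous_qfull.comp
  apply Continuous.subtype_mk
  apply continuous_pi
  intro c
  -- continuity of a ↦ wv hp a i c
  unfold wv
  simp only [Jpow_apply]
  by_cases hk : kk hp i ≤ c.2.val
  · simp only [dif_pos hk]
    -- continuity of a ↦ u0 f a (ss hp i) c'
    unfold u0
    by_cases h : Sdef f (ss hp i)
    · simp only [dif_pos h]
      by_cases hc : (⟨c.1, ⟨c.2.val - kk hp i, lt_of_le_of_lt (Nat.sub_le _ _) c.2.isLt⟩⟩ : Idx j)
          = f (ss hp i)
      · simp only [if_pos hc]
        exact continuous_const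
      · simp only [if_neg hc]
        by_cases hlt : blt (f (ss hp i)) ⟨c.1, ⟨c.2.val - kk hp i,
            lt_of_le_of_lt (Nat.sub_le _ _) c.2.isLt⟩⟩
        · simp only [dif_pos hlt]
          exact (continuous_apply _).comp (continuous_apply _)
        · simp only [dif_neg hlt]
          exact continuous_const
    · simp only [dif_neg h]
      exact continuous_const
  · simp only [dif_neg hk]
    exact continuous_const

lemma continuous_Phi (hp : IsFixedPt n p f) : Continuous (Phi hp) := by
  apply continuous_pi
  intro i
  have h1 : Continuous (fun L : ↥(cell n f) => (⟨L.1 i.1, L.2.2 i.1⟩ : Cb (f i.1))) :=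
    Continuous.subtype_mk ((continuous_apply i.1).comp continuous_subtype_val) _
  exact (continuous_chart_on_cell (f i.1)).comp h1

lemma Phi_Psi (hp : IsFixedPt n p f) (a : Etype f) : Phi hp (Psi hp a) = a := by
  funext i c
  show chartFun (f i.1) (mk ℂ (wv hp a i.1) (wv_ne hp a i.1)) c = a i c
  rw [chartFun_mk, wv_fi hp a i.1, div_one]
  rw [wv, kk_eq_zero hp i.2, ss_eq_self hp i.2, pow_zero, Module.End.one_apply]
  rw [u0_blt i.2 c.2]

/-- the chain lemma: points of the cell are determined along arcs. -/
lemma chain (hp : IsFixedPt n p f) {L : ZMod n → ℙ ℂ (Vsp j)} (hL : L ∈ cell n f)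
    (i : ZMod n) (t : ℕ) (ht : t ≤ kk hp i) :
    ∃ hne : (Jmap j ^ t) ((L (ss hp i)).rep) ≠ 0,
      mk ℂ ((Jmap j ^ t) ((L (ss hp i)).rep)) hne = L (ss hp i + (t : ZMod n)) := by
  induction t with
  | zero =>
    simp only [pow_zero, Module.End.one_apply, Nat.cast_zero, add_zero]
    exact ⟨(L (ss hp i)).rep_nonzero, (L (ss hp i)).mk_rep⟩
  | succ t ih =>
    obtain ⟨hne, hmk⟩ := ih (by omega)
    -- nonzero-ness of the next vector
    obtain ⟨hlt', heq'⟩ := shift_mid hp (show t + 1 ≤ kk hp i from ht)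
    have hrepb : (L (ss hp i)).rep (f (ss hp i)) ≠ 0 :=
      ((rep_mem_Cb_iff _).1 (hL.2 (ss hp i))).1
    have hcoord : (Jmap j ^ (t + 1)) ((L (ss hp i)).rep) (f (ss hp i + ((t + 1 : ℕ) : ZMod n)))
        = (L (ss hp i)).rep (f (ss hp i)) := by
      rw [heq', Jpow_coord _ _ hlt']
    have hne2 : (Jmap j ^ (t + 1)) ((L (ss hp i)).rep) ≠ 0 := by
      intro h0
      rw [h0, Pi.zero_apply] at hcoord
      exact hrepb hcoord.symm
    refine ⟨hne2, ?_⟩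
    -- use the QG property at vertex ss + t
    have hQ := hL.1 (ss hp i + (t : ZMod n))
    rw [← hmk, submodule_mk] at hQ
    have hsub : (L (ss hp i + (t : ZMod n) + 1)).submodule =
        Submodule.span ℂ {(L (ss hp i + (t : ZMod n) + 1)).rep} := by
      conv_lhs => rw [← (L (ss hp i + (t : ZMod n) + 1)).mk_rep]
      rw [submodule_mk]
    rw [hsub] at hQ
    have hmem : Jmap j ((Jmap j ^ t) ((L (ss hp i)).rep)) ∈
        Submodule.span ℂ {(L (ss hp i + (t : ZMod n) + 1)).rep} := by
      apply hQ
      exact Submodule.mem_map_of_mem (Submodule.mem_span_singleton_self _)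
    rw [Submodule.mem_span_singleton] at hmem
    obtain ⟨cc, hcc⟩ := hmem
    have hJt : Jmap j ((Jmap j ^ t) ((L (ss hp i)).rep)) =
        (Jmap j ^ (t + 1)) ((L (ss hp i)).rep) := by
      rw [pow_succ', Module.End.mul_apply]
    rw [hJt] at hcc
    have hcc0 : cc ≠ 0 := by
      intro h0
      rw [h0, zero_smul] at hcc
      exact hne2 hcc.symm
    have e1 : ss hp i + ((t + 1 : ℕ) : ZMod n) = ss hp i + (t : ZMod n) + 1 := by
      push_cast
      ring
    rw [e1]
    rw [show L (ss hp i + (t : ZMod n) + 1) = mk ℂ ((L (ss hp i + (t : ZMod n) + 1)).rep)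
      ((L (ss hp i + (t : ZMod n) + 1)).rep_nonzero) from ((L _).mk_rep).symm]
    rw [mk_eq_mk_iff]
    exact ⟨Units.mk0 cc hcc0, hcc⟩

lemma u0_of_cell (hp : IsFixedPt n p f) {L : ZMod n → ℙ ℂ (Vsp j)} (hL : L ∈ cell n f)
    (i0 : ZMod n) (h0 : Sdef f i0) :
    u0 f (Phi hp ⟨L, hL⟩) i0 = ((L i0).rep (f i0))⁻¹ • (L i0).rep := by
  obtain ⟨hrb, hrlow⟩ := (rep_mem_Cb_iff (L i0)).1 (hL.2 i0)
  funext c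
  rw [Pi.smul_apply, smul_eq_mul]
  by_cases hc : c = f i0
  · subst hc
    rw [u0_self h0, inv_mul_cancel₀ hrb]
  by_cases hlt : blt (f i0) c
  · rw [u0_blt h0 hlt]
    show chartFun (f i0) (L i0) ⟨c, hlt⟩ = _
    rw [chartFun]
    rw [div_eq_inv_mul]
  · rw [u0_zero hc hlt]
    have hblt : blt c (f i0) := by
      rcases blt_trichotomy (f i0) c with h | h | h
      · exact absurd h hlt
      · exact absurd h.symm hc
      · exact h
    rw [hrlow c hblt, mul_zero]

lemma Psi_Phi (hp : IsFixedPt n p f) (L : ↥(cell n f)) : Psi hp (Phi hp L) = L := by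
  obtain ⟨L, hL⟩ := L
  apply Subtype.ext
  funext i
  show mk ℂ (wv hp (Phi hp ⟨L, hL⟩) i) (wv_ne hp _ i) = L i
  have hd := ((rep_mem_Cb_iff (L (ss hp i))).1 (hL.2 (ss hp i))).1
  have hwv : wv hp (Phi hp ⟨L, hL⟩) i =
      ((L (ss hp i)).rep (f (ss hp i)))⁻¹ • (Jmap j ^ kk hp i) ((L (ss hp i)).rep) := by
    rw [wv, u0_of_cell hp hL (ss hp i) (Sdef_ss hp i), map_smul]
  obtain ⟨hne, hmk⟩ := chain hp hL i (kk hp i) (le_refl _)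
  rw [ss_add_kk hp i] at hmk
  rw [← hmk]
  rw [mk_eq_mk_iff]
  refine ⟨Units.mk0 (((L (ss hp i)).rep (f (ss hp i)))⁻¹) (inv_ne_zero hd), ?_⟩
  rw [hwv]
  rfl

/-! ### Final assembly -/

/-- Currying homeomorphism between dependent function spaces. -/
def piSigmaHomeo {ι : Type*} (κ : ι → Type*) : (∀ i, κ i → ℂ) ≃ₜ ((Σ i, κ i) → ℂ) where
  toFun a := fun s => a s.1 s.2
  invFun g := fun i c => g ⟨i, c⟩
  left_inv a := rfl
  right_inv g := funext fun s => rfl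
  continuous_toFun := continuous_pi fun s => (continuous_apply s.2).comp (continuous_apply s.1)
  continuous_invFun := continuous_pi fun i => continuous_pi fun c => continuous_apply (⟨i, c⟩ : Σ i, κ i)

lemma card_E (f : ZMod n → Idx j) :
    Fintype.card (Σ i : {i : ZMod n // Sdef f i}, Tb (f i.1)) = dDim n f := by
  rw [Fintype.card_sigma, dDim]
  rw [← Finset.sum_subtype (Finset.univ.filter fun i : ZMod n => Sdef f i)
    (fun x => by simp) (fun i => Fintype.card (Tb (f i)))]
  rw [Finset.sum_filter]
  apply Finset.sum_congr rfl
  intro i _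
  by_cases hS : Sdef f i
  · rw [if_pos hS, if_pos (show Jmap j (eVec (f (i - 1))) = 0 from hS),
      Nat.card_eq_fintype_card]
  · rw [if_neg hS, if_neg (show ¬ Jmap j (eVec (f (i - 1))) = 0 from hS)]

/-- The cell is homeomorphic to its parameter space. -/
noncomputable def cellHomeo (hp : IsFixedPt n p f) : ↥(cell n f) ≃ₜ Etype f where
  toEquiv := ⟨Phi hp, Psi hp, Psi_Phi hp, Phi_Psi hp⟩
  continuous_toFun := continuous_Phi hp
  continuous_invFun := continuous_Psi hp

/-- The full homeomorphism with affine space. -/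
noncomputable def fullHomeo (hp : IsFixedPt n p f) :
    ↥(cell n f) ≃ₜ (Fin (dDim n f) → ℂ) :=
  (cellHomeo hp).trans ((piSigmaHomeo _).trans
    (Homeomorph.piCongrLeft (Y := fun _ : Fin (dDim n f) => ℂ)
      (Fintype.equivFinOfCardEq (card_E f))))

end QGAux

theorem statement_3 (n M : ℕ) [NeZero n] (hM : 1 ≤ M) (j : Fin M → ℕ)
    (hpart : Antitone j) (hj : ∀ l, 1 ≤ j l)
    (p : ZMod n → ℙ ℂ (Vsp j)) (f : ZMod n → Idx j) (hp : IsFixedPt n p f) :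
    cell n f =
      {L | L ∈ QG n j ∧
        Filter.Tendsto (fun lam : ℂˣ => fun i => actP lam (L i)) zeroF (𝓝 p)} ∧
    Nonempty (↥(cell n f) ≃ₜ (Fin (dDim n f) → ℂ)) := by
  constructor
  · exact QGAux.cell_eq_attracting f p hp
  · exact ⟨QGAux.fullHomeo hp⟩
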